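/- The truncation on the Riesz space \(c_{00}\) of eventually zero real sequences defined by \(\bar{u} = u \wedge \mathbf{1}\) (pointwise minimum with the constant sequence 1) is a truncation but is not unital: there is no \(v \in c_{00}^+\) with \(u \wedge \mathbf{1} = u \wedge v\) for all \(u \in c_{00}^+\). -/

import Mathlib

/-- On `c₀₀` (finitely supported real sequences), `u ↦ u ⊓ 1` (pointwise
minimum with the constant sequence `1`) is a truncation, but it is not unital. -/
theorem c00_truncation_not_unital :
    ∃ t : (ℕ →₀ ℝ) → (ℕ →₀ ℝ),
      (∀ u : ℕ →₀ ℝ, 0 ≤ u → ∀ n, t u n = min (u n) 1) ∧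
      (∀ u : ℕ →₀ ℝ, 0 ≤ u → 0 ≤ t u) ∧
      (∀ u v : ℕ →₀ ℝ, 0 ≤ u → 0 ≤ v → u ⊓ t v ≤ t u ∧ t u ≤ u) ∧
      (∀ u : ℕ →₀ ℝ, 0 ≤ u → t u = 0 → u = 0) ∧
      ¬ ∃ v : ℕ →₀ ℝ, 0 ≤ v ∧ ∀ u : ℕ →₀ ℝ, 0 ≤ u → t u = u ⊓ v := by
  refine ⟨fun u => u ⊓ Finsupp.indicator u.support (fun _ _ => (1:ℝ)), ?_, ?_, ?_, ?_, ?_⟩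
  · intro u hu n
    rw [Finsupp.inf_apply]
    by_cases hn : n ∈ u.support
    · rw [Finsupp.indicator_of_mem hn]
    · rw [Finsupp.indicator_of_notMem hn]
      have : u n = 0 := Finsupp.notMem_support_iff.mp hn
      simp [this]
  · intro u hu
    intro n
    rw [Finsupp.inf_apply]
    simp only [Finsupp.coe_zero, Pi.zero_apply, le_inf_iff]
    by_cases hn : n ∈ u.support
    · exact ⟨hu n, by rw [Finsupp.indicator_of_mem hn]; norm_num⟩
    · exact ⟨hu n, by rw [Finsupp.indicator_of_notMem hn]⟩
  · intro u v hu hv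
    constructor
    · intro n
      rw [Finsupp.inf_apply, Finsupp.inf_apply, Finsupp.inf_apply]
      refine le_inf inf_le_left ?_
      by_cases hn : n ∈ u.support
      · rw [Finsupp.indicator_of_mem hn]
        refine le_trans inf_le_right (le_trans inf_le_right ?_)
        by_cases hm : n ∈ v.support
        · rw [Finsupp.indicator_of_mem hm]
        · rw [Finsupp.indicator_of_notMem hm]; norm_num
      · have h0 : u n = 0 := Finsupp.notMem_support_iff.mp hn
        rw [Finsupp.indicator_of_notMem hn, h0]
        exact inf_le_left
    · exact inf_le_left
  · intro u hu h
    ext n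
    simp only [Finsupp.coe_zero, Pi.zero_apply]
    by_cases hn : n ∈ u.support
    · have := congrArg (fun f => f n) h
      simp only [Finsupp.inf_apply, Finsupp.coe_zero, Pi.zero_apply] at this
      rw [Finsupp.indicator_of_mem hn] at this
      have h1 : u n ⊓ 1 = 0 := this
      have h0 := hu n
      simp only [Finsupp.coe_zero, Pi.zero_apply] at h0
      rw [min_def] at h1
      split_ifs at h1 <;> linarith
    · exact Finsupp.notMem_support_iff.mp hn
  · rintro ⟨v, hv, hall⟩
    obtain ⟨n, hn⟩ := Finset.exists_notMem v.support
    have hvn : v n = 0 := Finsupp.notMem_support_iff.mp hn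
    set u : ℕ →₀ ℝ := Finsupp.single n 1 with hu
    have hupos : (0:ℕ →₀ ℝ) ≤ u := by
      intro m
      simp only [Finsupp.coe_zero, Pi.zero_apply, hu]
      rcases eq_or_ne m n with rfl | hmn
      · simp
      · simp [Finsupp.single_apply, Ne.symm hmn]
    have := congrArg (fun f => f n) (hall u hupos)
    simp only [Finsupp.inf_apply] at this
    have hun : u n = 1 := by simp [hu]
    have hsup : n ∈ u.support := by simp [hu]
    rw [Finsupp.indicator_of_mem hsup, hun, hvn] at this
    norm_num at this
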